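/- For the linear path network with vertices z_0, …, z_{n-1} (|z_{j+1} - z_j| = 1, edges [z_j, z_{j+1}]) and any weight a : E → ℝ\{0}, the map Λ(Φ̇, ȧ) = (D F_{(Id,a)}(Φ̇, ȧ), D L_{Id}(Φ̇)) restricted to the complement of the translation kernel is injective; equivalently Λ has rank 3n - 3 on ℂ^n × ℝ^{n-1}. -/

import Mathlib

/-- Differential of the force contribution of a single unit edge with direction
`d` (`|d| = 1`), weight `w`, weight perturbation `wdot`, and relative vertex
perturbation `dPhi` (value of `Φ̇` at the far end minus at the near end):
`ẇ d + w (Φ̇' - d ⟨d, Φ̇'⟩_ℝ)`. -/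
noncomputable def dForce (w wdot : ℝ) (d dPhi : ℂ) : ℂ :=
  (wdot : ℂ) * d +
    (w : ℂ) * (dPhi - d * ((((starRingEnd ℂ d) * dPhi).re : ℝ) : ℂ))

lemma dForce_neg (w wdot : ℝ) (d dp : ℂ) :
    dForce w wdot (-d) (-dp) = - dForce w wdot d dp := by
  simp only [dForce, map_neg, neg_mul_neg]
  ring

lemma dForce_eq (w wdot : ℝ) (d dp : ℂ) (h : ((starRingEnd ℂ d) * dp).re = 0) :
    dForce w wdot d dp = (wdot : ℂ) * d + (w : ℂ) * dp := by
  simp [dForce, h]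

/-- For the linear path network with vertices `z 0, …, z (n-1)`
(`|z (j+1) - z j| = 1`, edges `[z j, z (j+1)]`) and any nowhere–vanishing
weight `a`, the map `Λ(Φ̇, ȧ) = (D F_{(Id,a)}(Φ̇, ȧ), D L_{Id}(Φ̇))` has kernel
reduced to the translations: if all components of `D F` and `D L` vanish, then
`Φ̇` is constant and `ȧ = 0`.  Equivalently `Λ` has rank `3n - 3`. -/
theorem path_network_flexible
    (n : ℕ) (hn : 2 ≤ n) (z : ℕ → ℂ) (a adot : ℕ → ℝ) (Ψ : ℕ → ℂ)
    (hzinj : ∀ j k, j < n → k < n → z j = z k → j = k)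
    (hunit : ∀ j, j + 1 < n → ‖z (j + 1) - z j‖ = 1)
    (ha : ∀ j, j + 1 < n → a j ≠ 0)
    (hDF : ∀ j < n,
      (if j + 1 < n then
        dForce (a j) (adot j) (z (j + 1) - z j) (Ψ (j + 1) - Ψ j) else 0)
      + (if 0 < j then
          dForce (a (j - 1)) (adot (j - 1)) (z (j - 1) - z j) (Ψ (j - 1) - Ψ j)
        else 0) = 0)
    (hDL : ∀ j, j + 1 < n →
      ((starRingEnd ℂ (z j - z (j + 1))) * (Ψ j - Ψ (j + 1))).re = 0) :
    (∀ j < n, Ψ j = Ψ 0) ∧ (∀ j, j + 1 < n → adot j = 0) := by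
  have hDL' : ∀ j, j + 1 < n →
      ((starRingEnd ℂ (z (j + 1) - z j)) * (Ψ (j + 1) - Ψ j)).re = 0 := by
    intro j hj
    have h := hDL j hj
    have e : (starRingEnd ℂ (z (j + 1) - z j)) * (Ψ (j + 1) - Ψ j)
        = (starRingEnd ℂ (z j - z (j + 1))) * (Ψ j - Ψ (j + 1)) := by
      simp only [map_sub]; ring
    rw [e]; exact h
  have hGzero : ∀ j, j + 1 < n →
      dForce (a j) (adot j) (z (j + 1) - z j) (Ψ (j + 1) - Ψ j) = 0 := by
    intro j
    induction j with
    | zero =>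
      intro h1
      have h0 := hDF 0 (by omega)
      simpa [h1] using h0
    | succ k ih =>
      intro hk2
      have hk1 : k + 1 < n := by omega
      have hDFk := hDF (k + 1) (by omega)
      rw [if_pos hk2, if_pos (Nat.succ_pos k)] at hDFk
      simp only [Nat.add_sub_cancel] at hDFk
      have e1 : z k - z (k + 1) = -(z (k + 1) - z k) := by ring
      have e2 : Ψ k - Ψ (k + 1) = -(Ψ (k + 1) - Ψ k) := by ring
      rw [e1, e2, dForce_neg] at hDFk
      have hik := ih hk1
      linear_combination hDFk + hik
  have key : ∀ j, j + 1 < n → adot j = 0 ∧ Ψ (j + 1) = Ψ j := by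
    intro j hj
    set d := z (j + 1) - z j with hdd
    set dp := Ψ (j + 1) - Ψ j with hdp
    have hre : ((starRingEnd ℂ d) * dp).re = 0 := hDL' j hj
    have hG0 : (adot j : ℂ) * d + (a j : ℂ) * dp = 0 := by
      have := hGzero j hj
      rwa [dForce_eq _ _ _ _ hre] at this
    have hnorm : Complex.normSq d = 1 := by
      have := hunit j hj
      rw [Complex.normSq_eq_norm_sq, hdd, this]; norm_num
    have haj : (a j : ℂ) ≠ 0 := by exact_mod_cast ha j hj
    have h1 : adot j * Complex.normSq d + a j * ((starRingEnd ℂ d) * dp).re = 0 := by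
      have h2 : (starRingEnd ℂ d) * ((adot j : ℂ) * d + (a j : ℂ) * dp) = 0 := by
        rw [hG0, mul_zero]
      have h3 : (starRingEnd ℂ d) * ((adot j : ℂ) * d + (a j : ℂ) * dp)
          = (adot j : ℂ) * ((Complex.normSq d : ℝ) : ℂ)
            + (a j : ℂ) * ((starRingEnd ℂ d) * dp) := by
        rw [← Complex.mul_conj]; ring
      rw [h3] at h2
      have h4 := congrArg Complex.re h2
      simpa [Complex.mul_re] using h4
    rw [hnorm, hre] at h1
    have hadot : adot j = 0 := by linarith
    have hdp0 : dp = 0 := by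
      have : (a j : ℂ) * dp = 0 := by
        rw [hadot] at hG0; simpa using hG0
      rcases mul_eq_zero.mp this with h | h
      · exact absurd h haj
      · exact h
    exact ⟨hadot, sub_eq_zero.mp hdp0⟩
  constructor
  · intro j
    induction j with
    | zero => intro _; rfl
    | succ k ih =>
      intro hk
      have h1 := (key k hk).2
      have h2 := ih (by omega)
      rw [h1, h2]
  · intro j hj; exact (key j hj).1
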